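/- The lattice E6 ⊕ A1 ⊕ A1 ⊕ A1 cannot be embedded in the lattice H ⊕ E8; that is, there is no 10 × 9 integer matrix M such that Mᵀ · G(H ⊕ E8) · M equals the Gram matrix of E6 ⊕ 3A1. -/

import Mathlib

open Matrix

/-- Gram matrix of the ambient lattice (10 × 10). -/
def ambientGram : Matrix (Fin 10) (Fin 10) ℤ :=
  !![0, 1, 0, 0, 0, 0, 0, 0, 0, 0;
      1, 0, 0, 0, 0, 0, 0, 0, 0, 0;
      0, 0, -2, 1, 0, 0, 0, 0, 0, 0;
      0, 0, 1, -2, 1, 0, 0, 0, 0, 0;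
      0, 0, 0, 1, -2, 1, 0, 0, 0, 1;
      0, 0, 0, 0, 1, -2, 1, 0, 0, 0;
      0, 0, 0, 0, 0, 1, -2, 1, 0, 0;
      0, 0, 0, 0, 0, 0, 1, -2, 1, 0;
      0, 0, 0, 0, 0, 0, 0, 1, -2, 0;
      0, 0, 0, 0, 1, 0, 0, 0, 0, -2]

/-- Gram matrix of the root lattice to be embedded (9 × 9). -/
def rootGram : Matrix (Fin 9) (Fin 9) ℤ :=
  !![-2, 1, 0, 0, 0, 0, 0, 0, 0;
      1, -2, 1, 0, 0, 0, 0, 0, 0;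
      0, 1, -2, 1, 0, 1, 0, 0, 0;
      0, 0, 1, -2, 1, 0, 0, 0, 0;
      0, 0, 0, 1, -2, 0, 0, 0, 0;
      0, 0, 1, 0, 0, -2, 0, 0, 0;
      0, 0, 0, 0, 0, 0, -2, 0, 0;
      0, 0, 0, 0, 0, 0, 0, -2, 0;
      0, 0, 0, 0, 0, 0, 0, 0, -2]

namespace Stmt11Aux

abbrev F := ZMod 2

/-- ambientGram mod 2 -/
def Gb : Matrix (Fin 10) (Fin 10) F :=
  !![0, 1, 0, 0, 0, 0, 0, 0, 0, 0;
      1, 0, 0, 0, 0, 0, 0, 0, 0, 0;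
      0, 0, 0, 1, 0, 0, 0, 0, 0, 0;
      0, 0, 1, 0, 1, 0, 0, 0, 0, 0;
      0, 0, 0, 1, 0, 1, 0, 0, 0, 1;
      0, 0, 0, 0, 1, 0, 1, 0, 0, 0;
      0, 0, 0, 0, 0, 1, 0, 1, 0, 0;
      0, 0, 0, 0, 0, 0, 1, 0, 1, 0;
      0, 0, 0, 0, 0, 0, 0, 1, 0, 0;
      0, 0, 0, 0, 1, 0, 0, 0, 0, 0]

/-- rootGram mod 2 -/
def Rb : Matrix (Fin 9) (Fin 9) F :=
  !![0, 1, 0, 0, 0, 0, 0, 0, 0;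
      1, 0, 1, 0, 0, 0, 0, 0, 0;
      0, 1, 0, 1, 0, 1, 0, 0, 0;
      0, 0, 1, 0, 1, 0, 0, 0, 0;
      0, 0, 0, 1, 0, 0, 0, 0, 0;
      0, 0, 1, 0, 0, 0, 0, 0, 0;
      0, 0, 0, 0, 0, 0, 0, 0, 0;
      0, 0, 0, 0, 0, 0, 0, 0, 0;
      0, 0, 0, 0, 0, 0, 0, 0, 0]

/-- inverse of Gb mod 2 -/
def W : Matrix (Fin 10) (Fin 10) F :=
  !![0, 1, 0, 0, 0, 0, 0, 0, 0, 0;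
      1, 0, 0, 0, 0, 0, 0, 0, 0, 0;
      0, 0, 0, 1, 0, 0, 0, 0, 0, 1;
      0, 0, 1, 0, 0, 0, 0, 0, 0, 0;
      0, 0, 0, 0, 0, 0, 0, 0, 0, 1;
      0, 0, 0, 0, 0, 0, 1, 0, 1, 0;
      0, 0, 0, 0, 0, 1, 0, 0, 0, 1;
      0, 0, 0, 0, 0, 0, 0, 0, 1, 0;
      0, 0, 0, 0, 0, 1, 0, 1, 0, 1;
      0, 0, 1, 0, 1, 0, 1, 0, 1, 0]

/-- partial inverse of Rb: P * Rb = diagonal with six ones -/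
def P : Matrix (Fin 9) (Fin 9) F :=
  !![0, 1, 0, 0, 0, 1, 0, 0, 0;
      1, 0, 0, 0, 0, 0, 0, 0, 0;
      0, 0, 0, 0, 0, 1, 0, 0, 0;
      0, 0, 0, 0, 1, 0, 0, 0, 0;
      0, 0, 0, 1, 0, 1, 0, 0, 0;
      1, 0, 1, 0, 1, 0, 0, 0, 0;
      0, 0, 0, 0, 0, 0, 0, 0, 0;
      0, 0, 0, 0, 0, 0, 0, 0, 0;
      0, 0, 0, 0, 0, 0, 0, 0, 0]

def D : Matrix (Fin 9) (Fin 9) F :=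
  !![1, 0, 0, 0, 0, 0, 0, 0, 0;
      0, 1, 0, 0, 0, 0, 0, 0, 0;
      0, 0, 1, 0, 0, 0, 0, 0, 0;
      0, 0, 0, 1, 0, 0, 0, 0, 0;
      0, 0, 0, 0, 1, 0, 0, 0, 0;
      0, 0, 0, 0, 0, 1, 0, 0, 0;
      0, 0, 0, 0, 0, 0, 0, 0, 0;
      0, 0, 0, 0, 0, 0, 0, 0, 0;
      0, 0, 0, 0, 0, 0, 0, 0, 0]

/-- inclusion of the last three coordinates -/
def Jmat : Matrix (Fin 9) (Fin 3) F :=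
  !![0, 0, 0;
      0, 0, 0;
      0, 0, 0;
      0, 0, 0;
      0, 0, 0;
      0, 0, 0;
      1, 0, 0;
      0, 1, 0;
      0, 0, 1]

open Module

/-- Key mod-2 linear algebra step: the last three columns of A are linearly
dependent. -/
theorem relation (A : Matrix (Fin 10) (Fin 9) F) (hA : Aᵀ * Gb * A = Rb) :
    ∃ y : Fin 3 → F, y ≠ 0 ∧ A *ᵥ (Jmat *ᵥ y) = 0 := by
  by_contra hcon
  push_neg at hcon
  have hJ : ∀ y : Fin 3 → F, A *ᵥ (Jmat *ᵥ y) = 0 → y = 0 := by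
    intro y hy
    by_contra h0
    exact hcon y h0 hy
  -- injectivity of A
  have hinj : ∀ c : Fin 9 → F, A *ᵥ c = 0 → c = 0 := by
    intro c hc
    have h1 : Rb *ᵥ c = 0 := by
      rw [← hA, ← mulVec_mulVec, hc, mulVec_zero]
    have h2 : D *ᵥ c = 0 := by
      have hPR : P * Rb = D := by decide
      rw [← hPR, ← mulVec_mulVec, h1, mulVec_zero]
    have hJJ : Jmat * Jmatᵀ = 1 - D := by decide
    have hcJ : Jmat *ᵥ (Jmatᵀ *ᵥ c) = c := by
      rw [mulVec_mulVec, hJJ, sub_mulVec, one_mulVec, h2, sub_zero]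
    have h3 : Jmatᵀ *ᵥ c = 0 := hJ _ (by rw [hcJ, hc])
    rw [← hcJ, h3, mulVec_zero]
  -- Gb is invertible
  have hGdet : IsUnit Gb.det := by
    have hGW : Gb * W = 1 := by decide
    have hWG : W * Gb = 1 := by decide
    exact (Matrix.isUnit_iff_isUnit_det Gb).mp ⟨⟨Gb, W, hGW, hWG⟩, rfl⟩
  -- rank computations
  have hkerA : LinearMap.ker A.mulVecLin = ⊥ := by
    rw [Submodule.eq_bot_iff]
    intro c hc
    exact hinj c (by simpa using hc)
  have hrankA : A.rank = 9 := by
    have h := LinearMap.finrank_range_add_finrank_ker A.mulVecLin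
    rw [hkerA, finrank_bot, add_zero, Module.finrank_pi] at h
    simpa [Matrix.rank] using h
  have hrank2 : (Aᵀ * Gb).rank = 9 := by
    rw [Matrix.rank_mul_eq_left_of_isUnit_det Gb Aᵀ hGdet, Matrix.rank_transpose, hrankA]
  have hker2 : finrank F ↥(LinearMap.ker (Aᵀ * Gb).mulVecLin) = 1 := by
    have h := LinearMap.finrank_range_add_finrank_ker (Aᵀ * Gb).mulVecLin
    rw [Module.finrank_pi, Fintype.card_fin] at h
    have h9 : finrank F ↥(LinearMap.range (Aᵀ * Gb).mulVecLin) = 9 := hrank2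
    omega
  have hkerAJ : LinearMap.ker (A * Jmat).mulVecLin = ⊥ := by
    rw [Submodule.eq_bot_iff]
    intro y hy
    apply hJ
    rw [mulVec_mulVec]
    simpa using hy
  have hrankAJ : finrank F ↥(LinearMap.range (A * Jmat).mulVecLin) = 3 := by
    have h := LinearMap.finrank_range_add_finrank_ker (A * Jmat).mulVecLin
    rw [hkerAJ, finrank_bot, add_zero, Module.finrank_pi] at h
    simpa using h
  have hsub : LinearMap.range (A * Jmat).mulVecLin ≤ LinearMap.ker (Aᵀ * Gb).mulVecLin := by
    rintro x ⟨y, rfl⟩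
    simp only [LinearMap.mem_ker, mulVecLin_apply, mulVec_mulVec]
    have hz : Aᵀ * Gb * (A * Jmat) = 0 := by
      rw [← Matrix.mul_assoc, hA]
      decide
    rw [hz, zero_mulVec]
  have hle : (3 : ℕ) ≤ 1 := by
    rw [← hrankAJ, ← hker2]
    exact Submodule.finrank_mono hsub
  omega

/-- every value of the ambient quadratic form is even -/
theorem evenQ (x : Fin 10 → ℤ) : ∃ r : ℤ, x ⬝ᵥ (ambientGram *ᵥ x) = 2 * r := by
  refine ⟨x 0 * x 1 + x 2 * x 3 + x 3 * x 4 + x 4 * x 5 + x 4 * x 9 + x 5 * x 6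
      + x 6 * x 7 + x 7 * x 8
      - x 2 ^ 2 - x 3 ^ 2 - x 4 ^ 2 - x 5 ^ 2 - x 6 ^ 2 - x 7 ^ 2 - x 8 ^ 2 - x 9 ^ 2, ?_⟩
  have hx : x = ![x 0, x 1, x 2, x 3, x 4, x 5, x 6, x 7, x 8, x 9] := by
    funext i; fin_cases i <;> rfl
  conv_lhs => rw [hx]
  simp [ambientGram, -Matrix.mulVec_cons]
  ring

end Stmt11Aux

open Stmt11Aux in
theorem stmt_11 :
    ¬ ∃ M : Matrix (Fin 10) (Fin 9) ℤ,
      Mᵀ * ambientGram * M = rootGram := by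
  rintro ⟨M, hM⟩
  -- reduce mod 2
  set f : ℤ →+* F := Int.castRingHom F with hf
  set A : Matrix (Fin 10) (Fin 9) F := M.map f with hAdef
  have hGb : ambientGram.map f = Gb := by decide
  have hRb : rootGram.map f = Rb := by decide
  have hA : Aᵀ * Gb * A = Rb := by
    rw [← hGb, ← hRb, ← hM, Matrix.map_mul, Matrix.map_mul, Matrix.transpose_map]
  obtain ⟨y, hy0, hy⟩ := relation A hA
  -- lift the mod-2 relation to the integers
  set cz : Fin 9 → ℤ :=
    ![0, 0, 0, 0, 0, 0, ((y 0).val : ℤ), ((y 1).val : ℤ), ((y 2).val : ℤ)] with hcz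
  set t : Fin 10 → ℤ := M *ᵥ cz with ht
  have hyvec : y = ![y 0, y 1, y 2] := by
    funext i; fin_cases i <;> rfl
  have hczcast : (fun j => f (cz j)) = Jmat *ᵥ y := by
    have h1 : (fun j => f (cz j)) = ![0, 0, 0, 0, 0, 0, y 0, y 1, y 2] := by
      funext j
      fin_cases j
      · show f 0 = 0; exact map_zero f
      · show f 0 = 0; exact map_zero f
      · show f 0 = 0; exact map_zero f
      · show f 0 = 0; exact map_zero f
      · show f 0 = 0; exact map_zero f
      · show f 0 = 0; exact map_zero f
      · show (((y 0).val : ℤ) : F) = y 0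
        push_cast
        rw [ZMod.natCast_val, ZMod.cast_id]
      · show (((y 1).val : ℤ) : F) = y 1
        push_cast
        rw [ZMod.natCast_val, ZMod.cast_id]
      · show (((y 2).val : ℤ) : F) = y 2
        push_cast
        rw [ZMod.natCast_val, ZMod.cast_id]
    have h2 : Jmat *ᵥ y = ![0, 0, 0, 0, 0, 0, y 0, y 1, y 2] := by
      rw [hyvec]
      simp [Jmat, -Matrix.mulVec_cons]
    rw [h1, h2]
  have htev : ∀ k, (2 : ℤ) ∣ t k := by
    intro k
    have h1 : f (t k) = 0 := by
      rw [ht, RingHom.map_mulVec f M cz k]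
      have : (f ∘ cz) = Jmat *ᵥ y := hczcast
      rw [this, ← hAdef, hy]
      rfl
    exact_mod_cast (ZMod.intCast_zmod_eq_zero_iff_dvd (t k) 2).mp h1
  -- the quadratic value
  have hQ : t ⬝ᵥ (ambientGram *ᵥ t) = cz ⬝ᵥ (rootGram *ᵥ cz) := by
    rw [ht, ← hM]
    rw [← mulVec_mulVec, ← mulVec_mulVec, mulVec_transpose]
    rw [dotProduct_comm, dotProduct_mulVec, dotProduct_comm]
  have hQval : cz ⬝ᵥ (rootGram *ᵥ cz) =
      -2 * (((y 0).val : ℤ) ^ 2 + ((y 1).val : ℤ) ^ 2 + ((y 2).val : ℤ) ^ 2) := by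
    simp [hcz, rootGram, -Matrix.mulVec_cons]
    ring
  -- t = 2 * b
  set b : Fin 10 → ℤ := fun k => t k / 2 with hb
  have htb : t = (2 : ℤ) • b := by
    funext k
    simp only [Pi.smul_apply, smul_eq_mul, hb]
    exact (Int.mul_ediv_cancel' (htev k)).symm
  obtain ⟨r, hr⟩ := evenQ b
  have h8 : t ⬝ᵥ (ambientGram *ᵥ t) = 8 * r := by
    rw [htb, mulVec_smul, dotProduct_smul, smul_dotProduct, hr]
    simp only [smul_eq_mul]
    ring
  -- final contradiction
  have hv0 : (y 0).val < 2 := ZMod.val_lt (y 0)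
  have hv1 : (y 1).val < 2 := ZMod.val_lt (y 1)
  have hv2 : (y 2).val < 2 := ZMod.val_lt (y 2)
  have hnz : (y 0).val ≠ 0 ∨ (y 1).val ≠ 0 ∨ (y 2).val ≠ 0 := by
    by_contra hall
    push_neg at hall
    apply hy0
    funext i
    fin_cases i <;>
      [exact (ZMod.val_eq_zero _).mp hall.1;
       exact (ZMod.val_eq_zero _).mp hall.2.1;
       exact (ZMod.val_eq_zero _).mp hall.2.2]
  have heq : -2 * (((y 0).val : ℤ) ^ 2 + ((y 1).val : ℤ) ^ 2 + ((y 2).val : ℤ) ^ 2)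
      = 8 * r := by rw [← hQval, ← hQ, h8]
  set p := (y 0).val
  set q := (y 1).val
  set s := (y 2).val
  clear_value p q s
  clear hcz ht hczcast hyvec hy hy0 hA hGb hRb hQ hQval h8 hr htb htev
  interval_cases p <;> interval_cases q <;> interval_cases s <;>
    norm_num at hnz <;> norm_num at heq <;> omega
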